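/- Let ℓ, m, k, k' be positive integers with ℓ = k·k', let ζ(y) ∈ F₂[y], and in R = F₂[x, y]/(xˡ − 1, yᵐ − 1) let c = x^k + ζ(y). Define χ(y) = ζ(y)^{k'} + 1 ∈ F₂[y], let χ̄(y) = gcd(χ(y), yᵐ + 1) in F₂[y], let g(y) ∈ F₂[y] be the polynomial with g(y)·χ̄(y) = yᵐ + 1, and set P(x, y) = Σ_{i=0}^{k'−1} x^{ℓ−i·k}·ζ(y)^i·g(y). Then the annihilator ideal of c in R is the principal ideal generated by the image of P(x, y): ann_R(c) = (P). -/

import Mathlib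

/-- The annihilator ideal of an element `c`: `{r : R | c * r = 0}`. -/
def annI (R : Type*) [CommRing R] (c : R) : Ideal R :=
  LinearMap.ker (LinearMap.lsmul R R c)

/-- The ring `F₂[x, y]/(xˡ − 1, yᵐ − 1)` underlying bivariate bicycle codes. -/
abbrev BBRing (l m : ℕ) : Type :=
  MvPolynomial (Fin 2) (ZMod 2) ⧸
    Ideal.span {(MvPolynomial.X 0 : MvPolynomial (Fin 2) (ZMod 2)) ^ l - 1,
      (MvPolynomial.X 1 : MvPolynomial (Fin 2) (ZMod 2)) ^ m - 1}

/-- The ideal `(xˡ − 1, yᵐ − 1)`. -/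
noncomputable abbrev BBIdeal (l m : ℕ) : Ideal (MvPolynomial (Fin 2) (ZMod 2)) :=
  Ideal.span {(MvPolynomial.X 0 : MvPolynomial (Fin 2) (ZMod 2)) ^ l - 1,
    (MvPolynomial.X 1 : MvPolynomial (Fin 2) (ZMod 2)) ^ m - 1}

open Polynomial AddMonoidAlgebra

noncomputable section Stmt15Aux

abbrev F2 := ZMod 2
abbrev Py := Polynomial F2
abbrev Sq (m : ℕ) : Type := Py ⧸ Ideal.span {(X : Py) ^ m - 1}
abbrev M1 (l m : ℕ) : Type := AddMonoidAlgebra (Sq m) (ZMod l)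

theorem mem_annI {R : Type*} [CommRing R] (c x : R) : x ∈ annI R c ↔ c * x = 0 := by
  rw [annI, LinearMap.mem_ker, LinearMap.lsmul_apply, smul_eq_mul]

theorem Xm_sub_one (m : ℕ) : (X : Py)^m - 1 = X^m + 1 := by
  rw [sub_eq_add_neg, CharTwo.neg_eq]

theorem Xm_ne_zero {m : ℕ} (hm : 0 < m) : (X : Py)^m + 1 ≠ 0 := fun h => by
  have := congrArg (Polynomial.eval 0) h
  simp [zero_pow hm.ne'] at this

theorem mk_Xm (m : ℕ) :
    Ideal.Quotient.mk (Ideal.span {(X : Py) ^ m - 1}) ((X:Py)^m + 1) = 0 := by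
  rw [← Xm_sub_one, Ideal.Quotient.eq_zero_iff_mem]
  exact Ideal.subset_span rfl

theorem S_H1 (m k' : ℕ) (ζ g : Py)
    (hg : g * EuclideanDomain.gcd (ζ ^ k' + 1) ((X : Py) ^ m + 1) = (X : Py) ^ m + 1) :
    (Ideal.Quotient.mk (Ideal.span {(X : Py) ^ m - 1}) g) *
      ((Ideal.Quotient.mk (Ideal.span {(X : Py) ^ m - 1}) ζ)^k' + 1) = 0 := by
  obtain ⟨u, hu⟩ : EuclideanDomain.gcd (ζ ^ k' + 1) ((X : Py) ^ m + 1) ∣ ζ ^ k' + 1 :=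
    EuclideanDomain.gcd_dvd_left _ _
  have key : g * (ζ ^ k' + 1) = ((X:Py)^m + 1) * u := by rw [hu, ← mul_assoc, hg]
  have := congrArg (Ideal.Quotient.mk (Ideal.span {(X : Py) ^ m - 1})) key
  simpa [mk_Xm m] using this

theorem S_H2 (m k' : ℕ) (hm : 0 < m) (ζ g : Py)
    (hg : g * EuclideanDomain.gcd (ζ ^ k' + 1) ((X : Py) ^ m + 1) = (X : Py) ^ m + 1)
    (s : Sq m)
    (hs : ((Ideal.Quotient.mk (Ideal.span {(X : Py) ^ m - 1}) ζ)^k' + 1) * s = 0) :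
    ∃ t, s = (Ideal.Quotient.mk (Ideal.span {(X : Py) ^ m - 1}) g) * t := by
  set χb := EuclideanDomain.gcd (ζ ^ k' + 1) ((X : Py) ^ m + 1) with hχb
  obtain ⟨p, rfl⟩ := Ideal.Quotient.mk_surjective s
  have hdvd : ((X:Py)^m + 1) ∣ (ζ ^ k' + 1) * p := by
    rw [← Xm_sub_one, ← Ideal.mem_span_singleton]
    rw [← map_pow, ← map_one (Ideal.Quotient.mk (Ideal.span {(X : Py) ^ m - 1})),
      ← map_add, ← map_mul, Ideal.Quotient.eq_zero_iff_mem] at hs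
    exact hs
  have hbez : ∃ a b : Py, χb = (ζ ^ k' + 1) * a + ((X:Py)^m + 1) * b :=
    ⟨_, _, EuclideanDomain.gcd_eq_gcd_ab _ _⟩
  obtain ⟨a, b, hab⟩ := hbez
  have hdvd2 : ((X:Py)^m + 1) ∣ χb * p := by
    rw [hab, add_mul]
    exact dvd_add (by rw [mul_assoc, mul_comm a p, ← mul_assoc]; exact hdvd.mul_right a)
      (Dvd.dvd.mul_right (dvd_mul_right _ _) p)
  obtain ⟨q, hq⟩ := hdvd2
  have hχb0 : χb ≠ 0 := by
    intro h
    rw [hχb, EuclideanDomain.gcd_eq_zero_iff] at h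
    exact Xm_ne_zero hm h.2
  have hpgq : p = g * q := by
    apply mul_left_cancel₀ hχb0
    rw [hq, ← hg]; ring
  exact ⟨Ideal.Quotient.mk _ q, by rw [hpgq, map_mul]⟩

theorem Sq.two_eq_zero (m : ℕ) : (2 : Sq m) = 0 := by
  have h2 : (2:F2) = 0 := by decide
  have : (2 : Sq m) = algebraMap F2 (Sq m) 2 := (map_ofNat (algebraMap F2 (Sq m)) 2).symm
  rw [this, h2, map_zero]
theorem Sq.add_self (m : ℕ) (s : Sq m) : s + s = 0 := by
  rw [← two_mul, Sq.two_eq_zero, zero_mul]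
theorem Sq.neg_eq (m : ℕ) (s : Sq m) : -s = s := by
  rw [neg_eq_iff_add_eq_zero, Sq.add_self]

theorem main_M1 (l m k k' : ℕ) (hk : 0 < k) (hk' : 0 < k') (hkk : k * k' = l)
    (z G : Sq m)
    (H1 : G * (z ^ k' + 1) = 0)
    (H2 : ∀ s : Sq m, (z ^ k' + 1) * s = 0 → ∃ t, s = G * t) :
    annI (M1 l m) (AddMonoidAlgebra.single ((k : ℕ) : ZMod l) 1 +
        AddMonoidAlgebra.single 0 z) =
    Ideal.span {∑ i ∈ Finset.range k',
      AddMonoidAlgebra.single (((l - i * k : ℕ)) : ZMod l) (z ^ i * G)} := by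
  haveI : NeZero l := ⟨by nlinarith⟩
  set c : M1 l m := AddMonoidAlgebra.single ((k : ℕ) : ZMod l) 1 +
      AddMonoidAlgebra.single 0 z with hc
  set P : M1 l m := ∑ i ∈ Finset.range k',
      AddMonoidAlgebra.single (((l - i * k : ℕ)) : ZMod l) (z ^ i * G) with hP
  -- exponent arithmetic
  have hik : ∀ i, i ≤ k' → i * k ≤ l := fun i hi => by
    calc i * k ≤ k' * k := Nat.mul_le_mul_right k hi
    _ = l := by rw [mul_comm]; exact hkk
  have hexp : ∀ i, i ≤ k' → (((l - i * k : ℕ)) : ZMod l) = -(((i * k : ℕ)) : ZMod l) := by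
    intro i hi
    have h1 : (l - i * k) + i * k = l := Nat.sub_add_cancel (hik i hi)
    have h2 := congrArg (Nat.cast : ℕ → ZMod l) h1
    rw [Nat.cast_add, ZMod.natCast_self] at h2
    exact eq_neg_of_add_eq_zero_left h2
  -- rewrite P with negative exponents
  have hPneg : P = ∑ i ∈ Finset.range k',
      AddMonoidAlgebra.single (-((i * k : ℕ) : ZMod l)) (z ^ i * G) := by
    rw [hP]
    exact Finset.sum_congr rfl fun i hi => by rw [hexp i (le_of_lt (Finset.mem_range.1 hi))]
  -- telescoping
  have hsingle_mul : ∀ (a b : ZMod l) (r s : Sq m),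
      (AddMonoidAlgebra.single a r * AddMonoidAlgebra.single b s : M1 l m)
        = AddMonoidAlgebra.single (a + b) (r * s) := fun a b r s =>
    AddMonoidAlgebra.single_mul_single a b r s
  have htele : ∀ n, n ≤ k' →
      c * (∑ i ∈ Finset.range n, AddMonoidAlgebra.single (-((i * k : ℕ) : ZMod l)) (z ^ i * G))
        = AddMonoidAlgebra.single ((k : ℕ) : ZMod l) G +
          AddMonoidAlgebra.single (((k : ℕ) : ZMod l) - ((n * k : ℕ) : ZMod l)) (z ^ n * G) := by
    intro n hn
    induction n with
    | zero =>
      simp only [Finset.range_zero, Finset.sum_empty, mul_zero]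
      rw [Nat.zero_mul, Nat.cast_zero, sub_zero, pow_zero, one_mul, ← AddMonoidAlgebra.single_add,
        Sq.add_self, AddMonoidAlgebra.single_zero]
    | succ n ih =>
      have hn' : n ≤ k' := Nat.le_of_succ_le hn
      rw [Finset.sum_range_succ, mul_add, ih hn', hc, add_mul, hsingle_mul, hsingle_mul]
      have e1 : ((k : ℕ) : ZMod l) + -((n * k : ℕ) : ZMod l)
          = ((k : ℕ) : ZMod l) - ((n * k : ℕ) : ZMod l) := by ring
      have e2 : ((0 : ZMod l)) + -((n * k : ℕ) : ZMod l) = -((n * k : ℕ) : ZMod l) := by ring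
      have e3 : -((n * k : ℕ) : ZMod l) = ((k : ℕ) : ZMod l) - (((n+1) * k : ℕ) : ZMod l) := by
        push_cast; ring
      rw [e1, e2, one_mul]
      have e4 : z * (z ^ n * G) = z ^ (n+1) * G := by ring
      rw [e4]
      -- now : (single k G + single (k - nk) (z^n G)) + (single (k - nk) (z^n G) + single (-nk) (z^{n+1} G))
      rw [← e3]
      have : ∀ (u v w : M1 l m), u + v + (v + w) = u + (v + v) + w := fun u v w => by ring
      rw [this, ← AddMonoidAlgebra.single_add, Sq.add_self, AddMonoidAlgebra.single_zero, add_zero]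
  have hcP : c * P = 0 := by
    have hkk' : k' * k = l := by rw [mul_comm]; exact hkk
    rw [hPneg, htele k' le_rfl, hkk', ZMod.natCast_self, sub_zero, ← AddMonoidAlgebra.single_add]
    have : G + z ^ k' * G = G * (z ^ k' + 1) := by ring
    rw [this, H1, AddMonoidAlgebra.single_zero]
  apply le_antisymm
  · -- ann ⊆ span
    intro f hf
    rw [mem_annI] at hf
    -- coefficient relation
    have hrel : ∀ j : ZMod l, f.coeff (j - ((k:ℕ) : ZMod l)) = z * f.coeff j := by
      intro j
      have h0 : (c * f).coeff j = 0 := by rw [hf]; rfl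
      rw [hc, add_mul, AddMonoidAlgebra.coeff_add, Finsupp.add_apply, AddMonoidAlgebra.coeff_single_mul_apply,
        AddMonoidAlgebra.coeff_single_mul_apply, one_mul, neg_zero, zero_add,
        neg_add_eq_sub] at h0
      have h1 := eq_neg_of_add_eq_zero_left h0
      rw [Sq.neg_eq] at h1
      exact h1
    have hiter : ∀ (i : ℕ) (j : ZMod l), f.coeff (j - ((i * k : ℕ) : ZMod l)) = z ^ i * f.coeff j := by
      intro i
      induction i with
      | zero => intro j; simp
      | succ i ih =>
        intro j
        have e : j - (((i+1) * k : ℕ) : ZMod l) = (j - ((i * k : ℕ) : ZMod l)) - ((k:ℕ) : ZMod l) := by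
          push_cast; ring
        rw [e, hrel, ih j, pow_succ]; ring
    have hchi : ∀ j : ZMod l, (z ^ k' + 1) * f.coeff j = 0 := by
      intro j
      have h := hiter k' j
      have hkk' : k' * k = l := by rw [mul_comm]; exact hkk
      rw [hkk', ZMod.natCast_self, sub_zero] at h
      calc (z ^ k' + 1) * f.coeff j = z ^ k' * f.coeff j + f.coeff j := by ring
      _ = f.coeff j + f.coeff j := by rw [← h]
      _ = 0 := Sq.add_self m _
    -- choice of cofactors
    set t : ZMod l → Sq m := fun j => Classical.choose (H2 (f.coeff j) (hchi j)) with hT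
    have ht : ∀ j, f.coeff j = G * t j := fun j => Classical.choose_spec (H2 (f.coeff j) (hchi j))
    set ρ : ℕ → ZMod l := fun j0 => (j0 : ZMod l) + (((k'-1) * k : ℕ) : ZMod l) with hρ
    set w : M1 l m := ∑ j0 ∈ Finset.range k, AddMonoidAlgebra.single (ρ j0) (t (ρ j0)) with hw
    set pos : ℕ × ℕ → ZMod l := fun p => ((p.1 + (k'-1-p.2)*k : ℕ) : ZMod l) with hpos
    have hposeq : ∀ p : ℕ × ℕ, p.2 < k' → ρ p.1 + -((p.2 * k : ℕ) : ZMod l) = pos p := by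
      intro p hp2
      have hsub : (k'-1-p.2)*k = (k'-1)*k - p.2*k := Nat.sub_mul _ _ _
      have hle : p.2*k ≤ (k'-1)*k := Nat.mul_le_mul_right k (by omega)
      rw [hpos]
      simp only []
      rw [hsub, Nat.cast_add, Nat.cast_sub hle, hρ]
      ring
    have key : w * P = ∑ p ∈ (Finset.range k) ×ˢ (Finset.range k'),
        AddMonoidAlgebra.single (pos p) (f.coeff (pos p)) := by
      rw [hPneg, hw, Finset.sum_mul_sum, ← Finset.sum_product']
      apply Finset.sum_congr rfl
      intro p hp
      obtain ⟨hp1, hp2⟩ := Finset.mem_product.1 hp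
      rw [Finset.mem_range] at hp1 hp2
      rw [hsingle_mul, hposeq p hp2]
      congr 1
      have hv := hiter p.2 (ρ p.1)
      have e2 : ρ p.1 - ((p.2 * k : ℕ) : ZMod l) = pos p := by
        rw [← hposeq p hp2]; ring
      rw [e2] at hv
      rw [hv, ht (ρ p.1)]
      ring
    have hf_sum : ∑ j ∈ Finset.univ, AddMonoidAlgebra.single j (f.coeff j) = f := by
      conv_rhs => rw [← AddMonoidAlgebra.sum_coeff_single f]
      rw [Finsupp.sum]
      exact (Finset.sum_subset (Finset.subset_univ _) (fun x _ hx => by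
        simp [Finsupp.notMem_support_iff.1 hx])).symm
    have hks : k' - 1 + 1 = k' := Nat.succ_pred_eq_of_pos hk'
    have hbij : ∑ p ∈ (Finset.range k) ×ˢ (Finset.range k'),
        AddMonoidAlgebra.single (pos p) (f.coeff (pos p))
          = ∑ j ∈ Finset.univ, AddMonoidAlgebra.single j (f.coeff j) := by
      apply Finset.sum_nbij' (i := pos) (j := fun a : ZMod l => (a.val % k, k' - 1 - a.val / k))
      · intro p _; exact Finset.mem_univ _
      · intro a _
        rw [Finset.mem_product, Finset.mem_range, Finset.mem_range]
        exact ⟨Nat.mod_lt _ hk, lt_of_le_of_lt (Nat.sub_le _ _) (Nat.sub_lt hk' one_pos)⟩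
      · -- left inverse
        intro p hp
        obtain ⟨hp1, hp2⟩ := Finset.mem_product.1 hp
        rw [Finset.mem_range] at hp1 hp2
        have hle : (k'-1-p.2)*k ≤ (k'-1)*k := Nat.mul_le_mul_right k (by omega)
        have hn : p.1 + (k'-1-p.2)*k < l := by
          have h2 : k + (k'-1)*k = l := by
            calc k + (k'-1)*k = (k'-1+1)*k := by ring
            _ = k'*k := by rw [hks]
            _ = l := by rw [mul_comm]; exact hkk
          omega
        have hval : (pos p).val = p.1 + (k'-1-p.2)*k := ZMod.val_cast_of_lt hn
        rw [hpos]
        simp only [ZMod.val_cast_of_lt hn]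
        have hmod : (p.1 + (k'-1-p.2)*k) % k = p.1 := by
          rw [Nat.add_mul_mod_self_right, Nat.mod_eq_of_lt hp1]
        have hdiv : (p.1 + (k'-1-p.2)*k) / k = k'-1-p.2 := by
          rw [Nat.add_mul_div_right _ _ hk, Nat.div_eq_of_lt hp1, zero_add]
        rw [hmod, hdiv]
        have : k' - 1 - (k'-1-p.2) = p.2 := by omega
        rw [this]
      · -- right inverse
        intro a _
        have hvl : a.val < l := ZMod.val_lt a
        have hd : a.val / k < k' := Nat.div_lt_of_lt_mul (by rw [hkk]; exact hvl)
        have h1 : k' - 1 - (k' - 1 - a.val / k) = a.val / k :=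
          Nat.sub_sub_self (Nat.le_sub_one_of_lt hd)
        rw [hpos]
        simp only [h1]
        rw [Nat.mod_add_div']
        exact ZMod.natCast_rightInverse a
      · intro p _; rfl
    rw [Ideal.mem_span_singleton']
    exact ⟨w, by rw [key, hbij, hf_sum]⟩
  · rw [Ideal.span_le, Set.singleton_subset_iff, SetLike.mem_coe, mem_annI]
    exact hcP

variable (l m : ℕ)

def yS : Sq m := Ideal.Quotient.mk _ (X : Py)
def xR : BBRing l m := Ideal.Quotient.mk _ (MvPolynomial.X 0)
def yR : BBRing l m := Ideal.Quotient.mk _ (MvPolynomial.X 1)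

theorem algebraMap_M1 (s : Sq m) :
    algebraMap (Sq m) (M1 l m) s = AddMonoidAlgebra.single 0 s := by
  rw [AddMonoidAlgebra.coe_algebraMap]
  simp

-- forward algebra hom
def phi0 : MvPolynomial (Fin 2) F2 →ₐ[F2] M1 l m :=
  MvPolynomial.aeval ![(AddMonoidAlgebra.single 1 1 : M1 l m), AddMonoidAlgebra.single 0 (yS m)]

theorem phi0_X0 : phi0 l m (MvPolynomial.X 0) = AddMonoidAlgebra.single 1 1 := by
  simp [phi0]
theorem phi0_X1 : phi0 l m (MvPolynomial.X 1) = AddMonoidAlgebra.single 0 (yS m) := by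
  simp [phi0]

theorem phi0_vanish : ∀ a ∈ BBIdeal l m, phi0 l m a = 0 := by
  intro a ha
  have h1 : phi0 l m ((MvPolynomial.X 0 : MvPolynomial (Fin 2) F2) ^ l - 1) = 0 := by
    rw [map_sub, map_pow, map_one, phi0_X0]
    rw [AddMonoidAlgebra.single_pow, one_pow]
    have : l • (1 : ZMod l) = 0 := by
      rw [nsmul_eq_mul, mul_one, ZMod.natCast_self]
    rw [this, ← AddMonoidAlgebra.one_def, sub_self]
  have h2 : phi0 l m ((MvPolynomial.X 1 : MvPolynomial (Fin 2) F2) ^ m - 1) = 0 := by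
    rw [map_sub, map_pow, map_one, phi0_X1]
    rw [AddMonoidAlgebra.single_pow, smul_zero, AddMonoidAlgebra.one_def, ← AddMonoidAlgebra.single_sub]
    have : (yS m) ^ m - 1 = 0 := by
      rw [yS, ← map_pow, ← map_one (Ideal.Quotient.mk (Ideal.span {(X : Py) ^ m - 1})),
        ← map_sub, Ideal.Quotient.eq_zero_iff_mem]
      exact Ideal.subset_span rfl
    rw [this, AddMonoidAlgebra.single_zero]
  have : BBIdeal l m ≤ RingHom.ker (phi0 l m).toRingHom := by
    rw [Ideal.span_le]
    rintro x (rfl | rfl)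
    · exact h1
    · exact h2
  exact this ha

def phi : BBRing l m →ₐ[F2] M1 l m :=
  Ideal.Quotient.liftₐ (BBIdeal l m) (phi0 l m) (phi0_vanish l m)

-- backward
def fS : Sq m →ₐ[F2] BBRing l m :=
  Ideal.Quotient.liftₐ _ (Polynomial.aeval (yR l m)) (by
    intro a ha
    rw [Ideal.mem_span_singleton] at ha
    obtain ⟨q, rfl⟩ := ha
    rw [map_mul]
    have : Polynomial.aeval (yR l m) ((X : Py) ^ m - 1) = 0 := by
      rw [map_sub, map_pow, map_one, aeval_X, yR, ← map_pow,
        ← map_one (Ideal.Quotient.mk (BBIdeal l m)), ← map_sub,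
        Ideal.Quotient.eq_zero_iff_mem]
      exact Ideal.subset_span (Set.mem_insert_of_mem _ rfl)
    rw [this, zero_mul])

theorem xR_pow_l [NeZero l] : (xR l m) ^ l = 1 := by
  rw [xR, ← map_pow, ← map_one (Ideal.Quotient.mk (BBIdeal l m)),
    Ideal.Quotient.mk_eq_mk_iff_sub_mem]
  exact Ideal.subset_span (Set.mem_insert _ _)

theorem xR_pow_mod [NeZero l] (n : ℕ) : (xR l m) ^ (n % l) = (xR l m) ^ n := by
  conv_rhs => rw [← Nat.div_add_mod n l, pow_add, pow_mul, xR_pow_l, one_pow, one_mul]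

def gmon [NeZero l] : Multiplicative (ZMod l) →* BBRing l m where
  toFun a := (xR l m) ^ (Multiplicative.toAdd a).val
  map_one' := by
    show (xR l m) ^ (0 : ZMod l).val = 1
    rw [ZMod.val_zero, pow_zero]
  map_mul' a b := by
    show (xR l m) ^ ((Multiplicative.toAdd a + Multiplicative.toAdd b : ZMod l)).val = _
    rw [ZMod.val_add, xR_pow_mod, pow_add]

def psi [NeZero l] : M1 l m →ₐ[F2] BBRing l m :=
  AddMonoidAlgebra.liftNCAlgHom (fS l m) (gmon l m) (fun _ _ => Commute.all _ _)

theorem psi_single [NeZero l] (a : ZMod l) (s : Sq m) :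
    psi l m (AddMonoidAlgebra.single a s) = fS l m s * (xR l m) ^ a.val := by
  show AddMonoidAlgebra.liftNC _ _ _ = _
  rw [AddMonoidAlgebra.liftNC_single]
  rfl

theorem phi_mk (p : MvPolynomial (Fin 2) F2) :
    phi l m (Ideal.Quotient.mk (BBIdeal l m) p) = phi0 l m p := by
  rw [phi, Ideal.Quotient.liftₐ_apply]
  rfl

theorem fS_mk (p : Py) :
    fS l m (Ideal.Quotient.mk (Ideal.span {(X : Py) ^ m - 1}) p) =
      Polynomial.aeval (yR l m) p := by
  rw [fS, Ideal.Quotient.liftₐ_apply]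
  rfl

theorem psi_phi [NeZero l] :
    (psi l m).comp (phi l m) = AlgHom.id F2 (BBRing l m) := by
  apply Ideal.Quotient.algHom_ext
  apply MvPolynomial.algHom_ext
  intro i
  fin_cases i
  · show psi l m (phi l m (Ideal.Quotient.mk _ (MvPolynomial.X 0))) = _
    rw [phi_mk, phi0_X0, psi_single, map_one, one_mul, ZMod.val_one_eq_one_mod,
      xR_pow_mod, pow_one]
    rfl
  · show psi l m (phi l m (Ideal.Quotient.mk _ (MvPolynomial.X 1))) = _
    rw [phi_mk, phi0_X1, psi_single, ZMod.val_zero, pow_zero, mul_one, yS, fS_mk, aeval_X]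
    rfl

theorem phi_psi [NeZero l] :
    (phi l m).toRingHom.comp (psi l m).toRingHom = RingHom.id (M1 l m) := by
  apply AddMonoidAlgebra.ringHom_ext
  · intro b
    obtain ⟨p, rfl⟩ := Ideal.Quotient.mk_surjective b
    show phi l m (psi l m (AddMonoidAlgebra.single 0 _)) = _
    rw [psi_single, ZMod.val_zero, pow_zero, mul_one, fS_mk,
      ← Polynomial.aeval_algHom_apply (phi l m) (yR l m) p]
    have hyR : phi l m (yR l m) = algebraMap (Sq m) (M1 l m) (yS m) := by
      rw [yR, phi_mk, phi0_X1, algebraMap_M1]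
    rw [hyR, Polynomial.aeval_algebraMap_apply, algebraMap_M1]
    congr 1
    have : yS m = Ideal.Quotient.mkₐ F2 (Ideal.span {(X : Py) ^ m - 1}) X := rfl
    rw [this, Polynomial.aeval_algHom_apply, Polynomial.aeval_X_left_apply]
    rfl
  · intro a
    show phi l m (psi l m (AddMonoidAlgebra.single a 1)) = _
    rw [psi_single, map_one, one_mul, map_pow, xR, phi_mk, phi0_X0,
      AddMonoidAlgebra.single_pow, one_pow, nsmul_eq_mul, mul_one,
      ZMod.natCast_rightInverse a]
    rfl

def eBB [NeZero l] : BBRing l m ≃+* M1 l m :=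
  RingEquiv.ofRingHom (phi l m).toRingHom (psi l m).toRingHom
    (phi_psi l m)
    (by
      have := psi_phi l m
      rw [DFunLike.ext_iff] at this ⊢
      intro x; exact this x)

theorem annI_comap {R R' : Type*} [CommRing R] [CommRing R'] (e : R ≃+* R') (c : R) :
    annI R c = (annI R' (e c)).comap (e : R →+* R') := by
  ext x
  rw [Ideal.mem_comap, mem_annI, mem_annI]
  show c * x = 0 ↔ e c * e x = 0
  rw [← map_mul]
  exact ⟨fun h => by rw [h, map_zero], fun h => by
    have := congrArg e.symm h; simpa using this⟩

theorem span_comap {R R' : Type*} [CommRing R] [CommRing R'] (e : R ≃+* R') (p : R) :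
    Ideal.span {p} = (Ideal.span {e p}).comap (e : R →+* R') := by
  ext x
  rw [Ideal.mem_comap, Ideal.mem_span_singleton, Ideal.mem_span_singleton]
  constructor
  · rintro ⟨d, rfl⟩; exact ⟨e d, map_mul e p d⟩
  · rintro ⟨d, hd⟩
    refine ⟨e.symm d, ?_⟩
    apply e.injective
    rw [map_mul, RingEquiv.apply_symm_apply]
    exact hd

theorem aeval_yS (p : Py) :
    Polynomial.aeval (yS m) p = Ideal.Quotient.mk (Ideal.span {(X : Py) ^ m - 1}) p := by
  have : yS m = Ideal.Quotient.mkₐ F2 (Ideal.span {(X : Py) ^ m - 1}) X := rfl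
  rw [this, Polynomial.aeval_algHom_apply, Polynomial.aeval_X_left_apply]
  rfl

theorem phi0_aeval (p : Py) :
    phi0 l m (Polynomial.aeval (MvPolynomial.X 1) p) =
      AddMonoidAlgebra.single 0 (Ideal.Quotient.mk (Ideal.span {(X : Py) ^ m - 1}) p) := by
  rw [← Polynomial.aeval_algHom_apply (phi0 l m) (MvPolynomial.X 1) p, phi0_X1, ← algebraMap_M1,
    Polynomial.aeval_algebraMap_apply, algebraMap_M1, aeval_yS]

theorem phi0_X0_pow (n : ℕ) :
    phi0 l m ((MvPolynomial.X 0 : MvPolynomial (Fin 2) F2) ^ n) =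
      AddMonoidAlgebra.single ((n : ℕ) : ZMod l) 1 := by
  rw [map_pow, phi0_X0, AddMonoidAlgebra.single_pow, one_pow, nsmul_eq_mul, mul_one]

end Stmt15Aux

/-- For a semiperiodic element `c = x^k + ζ(y)` (with `k·k' = ℓ`), setting
`χ(y) = ζ(y)^{k'} + 1`, `χ̄ = gcd(χ, yᵐ + 1)`, `g·χ̄ = yᵐ + 1` and
`P(x, y) = Σ_{i<k'} x^{ℓ−i·k}·ζ(y)^i·g(y)`, the annihilator of `c` in `R`
is the principal ideal generated by the image of `P`. -/
theorem stmt15 (l m k k' : ℕ) (hk : 0 < k) (hk' : 0 < k') (hm : 0 < m)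
    (hkk : k * k' = l) (ζ g : Polynomial (ZMod 2))
    (hg : g * EuclideanDomain.gcd (ζ ^ k' + 1)
        ((Polynomial.X : Polynomial (ZMod 2)) ^ m + 1) =
      (Polynomial.X : Polynomial (ZMod 2)) ^ m + 1) :
    annI (BBRing l m)
      (Ideal.Quotient.mk (BBIdeal l m)
        ((MvPolynomial.X 0 : MvPolynomial (Fin 2) (ZMod 2)) ^ k +
          Polynomial.aeval (MvPolynomial.X 1 : MvPolynomial (Fin 2) (ZMod 2)) ζ)) =
    Ideal.span {Ideal.Quotient.mk (BBIdeal l m)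
      (∑ i ∈ Finset.range k',
        (MvPolynomial.X 0 : MvPolynomial (Fin 2) (ZMod 2)) ^ (l - i * k) *
          Polynomial.aeval (MvPolynomial.X 1 : MvPolynomial (Fin 2) (ZMod 2))
            (ζ ^ i * g))} := by
  haveI : NeZero l := ⟨by nlinarith⟩
  set mkS := Ideal.Quotient.mk (Ideal.span {(X : Py) ^ m - 1}) with hmkS
  set z : Sq m := mkS ζ with hz
  set G : Sq m := mkS g with hG
  set e := eBB l m with he
  have he_apply : ∀ x : BBRing l m, e x = phi l m x := fun x => rfl
  have hc : e (Ideal.Quotient.mk (BBIdeal l m)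
      ((MvPolynomial.X 0 : MvPolynomial (Fin 2) (ZMod 2)) ^ k +
        Polynomial.aeval (MvPolynomial.X 1 : MvPolynomial (Fin 2) (ZMod 2)) ζ)) =
      AddMonoidAlgebra.single ((k : ℕ) : ZMod l) 1 + AddMonoidAlgebra.single 0 z := by
    rw [he_apply, phi_mk, map_add, phi0_X0_pow, phi0_aeval]
  have hP : e (Ideal.Quotient.mk (BBIdeal l m)
      (∑ i ∈ Finset.range k',
        (MvPolynomial.X 0 : MvPolynomial (Fin 2) (ZMod 2)) ^ (l - i * k) *
          Polynomial.aeval (MvPolynomial.X 1 : MvPolynomial (Fin 2) (ZMod 2))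
            (ζ ^ i * g))) =
      ∑ i ∈ Finset.range k',
        AddMonoidAlgebra.single (((l - i * k : ℕ)) : ZMod l) (z ^ i * G) := by
    rw [he_apply, phi_mk, map_sum]
    apply Finset.sum_congr rfl
    intro i _
    rw [map_mul, phi0_X0_pow, phi0_aeval, AddMonoidAlgebra.single_mul_single,
      add_zero, one_mul, map_mul, map_pow]
  rw [annI_comap (R' := M1 l m) e _, span_comap (R' := M1 l m) e _, hc, hP]
  exact congrArg (Ideal.comap _)
    (main_M1 l m k k' hk hk' hkk z G (S_H1 m k' ζ g hg) (S_H2 m k' hm ζ g hg))
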